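/- Block criterion for weak ergodicity: a nonhomogeneous Markov chain given by a sequence of stochastic matrices (P^{(t)})_{t≥0} on a nonempty finite state space S is weakly ergodic if and only if there exists a strictly increasing sequence of nonnegative integers n_0 < n_1 < n_2 < … such that Σ_{i=0}^∞ (1 − δ(P^{(n_i, n_{i+1})})) = ∞. -/

import Mathlib

open Filter

/-- The ℓ¹ distance between two vectors on a finite index set. -/
noncomputable def l1 {S : Type*} [Fintype S] (u v : S → ℝ) : ℝ :=
  ∑ k, |u k - v k|

/-- A stochastic matrix: nonnegative entries, rows summing to 1. -/
def IsStochastic {S : Type*} [Fintype S] (P : Matrix S S ℝ) : Prop :=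
  (∀ i k, 0 ≤ P i k) ∧ ∀ i, ∑ k, P i k = 1

/-- A probability distribution (row vector) on a finite state space. -/
def IsDist {S : Type*} [Fintype S] (μ : S → ℝ) : Prop :=
  (∀ k, 0 ≤ μ k) ∧ ∑ k, μ k = 1

/-- Dobrushin's ergodic coefficient: the maximum total-variation distance
between two rows of `P`. -/
noncomputable def dobrushin {S : Type*} [Fintype S] (P : Matrix S S ℝ) : ℝ :=
  ⨆ p : S × S, l1 (P p.1) (P p.2) / 2

/-- The product `P^{(n1,n2)} = P^{(n1)} P^{(n1+1)} ⋯ P^{(n2−1)}` of the transition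
matrices of a nonhomogeneous Markov chain. -/
noncomputable def Pprod {S : Type*} [Fintype S] [DecidableEq S]
    (P : ℕ → Matrix S S ℝ) (n1 n2 : ℕ) : Matrix S S ℝ :=
  ((List.range (n2 - n1)).map fun t => P (n1 + t)).prod

/-- Weak ergodicity of a nonhomogeneous Markov chain: the initial distribution
is forgotten in the limit. -/
def WeaklyErgodic {S : Type*} [Fintype S] [DecidableEq S]
    (P : ℕ → Matrix S S ℝ) : Prop :=
  ∀ μ ν : S → ℝ, IsDist μ → IsDist ν → ∀ n1 : ℕ,
    Tendsto (fun n2 => l1 (Matrix.vecMul μ (Pprod P n1 n2)) (Matrix.vecMul ν (Pprod P n1 n2)))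
      atTop (nhds 0)

section Aux
open Matrix
variable {S : Type*} [Fintype S]


lemma l1_nonneg (u v : S → ℝ) : 0 ≤ l1 u v :=
  Finset.sum_nonneg fun _ _ => abs_nonneg _

lemma l1_self (u : S → ℝ) : l1 u u = 0 := by simp [l1]

lemma dob_bdd (P : Matrix S S ℝ) :
    BddAbove (Set.range fun p : S × S => l1 (P p.1) (P p.2) / 2) :=
  (Set.finite_range _).bddAbove

lemma dobrushin_nonneg [Nonempty S] (P : Matrix S S ℝ) : 0 ≤ dobrushin P := by
  obtain ⟨i⟩ := ‹Nonempty S›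
  have := le_ciSup (dob_bdd P) (i, i)
  simp only [l1_self] at this
  simpa [dobrushin] using this

lemma l1_row_le_dob (P : Matrix S S ℝ) (i j : S) :
    l1 (P i) (P j) ≤ 2 * dobrushin P := by
  have := le_ciSup (dob_bdd P) (i, j)
  rw [show (⨆ p : S × S, l1 (P p.1) (P p.2) / 2) = dobrushin P from rfl] at this
  linarith

lemma l1_le_two {μ ν : S → ℝ} (hμ : IsDist μ) (hν : IsDist ν) : l1 μ ν ≤ 2 := by
  have : l1 μ ν ≤ ∑ k, (μ k + ν k) := by
    apply Finset.sum_le_sum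
    intro k _
    rw [abs_sub_le_iff]
    constructor <;> nlinarith [hμ.1 k, hν.1 k]
  rw [Finset.sum_add_distrib, hμ.2, hν.2] at this
  linarith

lemma dobrushin_le_one [Nonempty S] {P : Matrix S S ℝ} (hP : IsStochastic P) :
    dobrushin P ≤ 1 := by
  apply ciSup_le
  intro p
  have : l1 (P p.1) (P p.2) ≤ 2 := l1_le_two ⟨hP.1 p.1, hP.2 p.1⟩ ⟨hP.1 p.2, hP.2 p.2⟩
  linarith

lemma contraction [Nonempty S] {P : Matrix S S ℝ} (hP : IsStochastic P)
    (u v : S → ℝ) (huv : ∑ k, u k = ∑ k, v k) :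
    l1 (vecMul u P) (vecMul v P) ≤ dobrushin P * l1 u v := by
  classical
  set a : S → ℝ := fun k => max (u k - v k) 0 with ha
  set b : S → ℝ := fun k => max (v k - u k) 0 with hb
  have ha0 : ∀ k, 0 ≤ a k := fun k => le_max_right _ _
  have hb0 : ∀ k, 0 ≤ b k := fun k => le_max_right _ _
  have hab : ∀ k, u k - v k = a k - b k := by
    intro k; simp only [ha, hb]
    rcases le_total (u k) (v k) with h | h
    · rw [max_eq_right (by linarith), max_eq_left (by linarith)]; ring
    · rw [max_eq_left (by linarith), max_eq_right (by linarith)]; ring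
  have habs : ∀ k, |u k - v k| = a k + b k := by
    intro k; simp only [ha, hb]
    rcases le_total (u k) (v k) with h | h
    · rw [abs_of_nonpos (by linarith), max_eq_right (by linarith),
        max_eq_left (by linarith)]; ring
    · rw [abs_of_nonneg (by linarith), max_eq_left (by linarith),
        max_eq_right (by linarith)]; ring
  set c : ℝ := ∑ k, a k with hc
  have hsum : ∑ k, b k = c := by
    have : ∑ k, (a k - b k) = 0 := by
      simp only [← hab, Finset.sum_sub_distrib, huv, sub_self]
    rw [Finset.sum_sub_distrib] at this
    linarith
  have hl1 : l1 u v = 2 * c := by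
    simp only [l1, habs, Finset.sum_add_distrib, hsum, hc]; ring
  have hc0 : 0 ≤ c := Finset.sum_nonneg fun k _ => ha0 k
  rcases eq_or_lt_of_le hc0 with hceq | hcpos
  · -- c = 0 : u = v
    have : ∀ k, a k = 0 := by
      intro k
      have := (Finset.sum_eq_zero_iff_of_nonneg (fun k _ => ha0 k)).mp hceq.symm
      exact this k (Finset.mem_univ k)
    have hb' : ∀ k, b k = 0 := by
      intro k
      have := (Finset.sum_eq_zero_iff_of_nonneg (fun k _ => hb0 k)).mp
        (by rw [hsum, ← hceq])
      exact this k (Finset.mem_univ k)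
    have huv' : u = v := by
      funext k
      have h := hab k
      rw [this k, hb' k] at h
      linarith
    rw [huv']
    simp [l1, mul_zero, le_refl]
  · -- main case
    have key : ∀ k, c * (vecMul u P k - vecMul v P k)
        = ∑ i, ∑ j, a i * b j * (P i k - P j k) := by
      intro k
      have h1 : vecMul u P k - vecMul v P k = ∑ i, (a i - b i) * P i k := by
        simp only [vecMul, dotProduct]
        rw [← Finset.sum_sub_distrib]
        congr 1; funext i; rw [← hab i]; ring
      rw [h1]
      have hA : ∑ i, ∑ j, a i * b j * P i k = (∑ j, b j) * (∑ i, a i * P i k) := by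
        rw [Finset.mul_sum]
        apply Finset.sum_congr rfl
        intro i _
        rw [Finset.sum_mul]
        exact Finset.sum_congr rfl fun j _ => by ring
      have hB : ∑ i, ∑ j, a i * b j * P j k = (∑ i, a i) * (∑ j, b j * P j k) := by
        rw [Finset.sum_mul]
        apply Finset.sum_congr rfl
        intro i _
        rw [Finset.mul_sum]
        exact Finset.sum_congr rfl fun j _ => by ring
      have h2 : ∑ i, ∑ j, a i * b j * (P i k - P j k)
          = (∑ j, b j) * (∑ i, a i * P i k) - (∑ i, a i) * (∑ j, b j * P j k) := by
        simp only [mul_sub, Finset.sum_sub_distrib, hA, hB]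
      rw [h2, hsum, ← hc, Finset.mul_sum, Finset.mul_sum, Finset.mul_sum,
        ← Finset.sum_sub_distrib]
      congr 1; funext i; ring
    have hbound : c * l1 (vecMul u P) (vecMul v P)
        ≤ ∑ i, ∑ j, a i * b j * l1 (P i) (P j) := by
      rw [l1, Finset.mul_sum]
      have step : ∀ k : S, c * |vecMul u P k - vecMul v P k|
          ≤ ∑ i, ∑ j, a i * b j * |P i k - P j k| := by
        intro k
        rw [← abs_of_nonneg hc0, ← abs_mul, key k]
        calc |∑ i, ∑ j, a i * b j * (P i k - P j k)|
            ≤ ∑ i, |∑ j, a i * b j * (P i k - P j k)| := Finset.abs_sum_le_sum_abs _ _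
          _ ≤ ∑ i, ∑ j, a i * b j * |P i k - P j k| := by
              apply Finset.sum_le_sum; intro i _
              calc |∑ j, a i * b j * (P i k - P j k)|
                  ≤ ∑ j, |a i * b j * (P i k - P j k)| := Finset.abs_sum_le_sum_abs _ _
                _ ≤ ∑ j, a i * b j * |P i k - P j k| := by
                    apply Finset.sum_le_sum; intro j _
                    rw [abs_mul, abs_of_nonneg (mul_nonneg (ha0 i) (hb0 j))]
      calc ∑ k, c * |vecMul u P k - vecMul v P k|
          ≤ ∑ k, ∑ i, ∑ j, a i * b j * |P i k - P j k| :=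
            Finset.sum_le_sum fun k _ => step k
        _ = ∑ i, ∑ j, a i * b j * l1 (P i) (P j) := by
            rw [Finset.sum_comm]
            congr 1; funext i
            rw [Finset.sum_comm]
            congr 1; funext j
            rw [l1, Finset.mul_sum]
    have hbound2 : ∑ i, ∑ j, a i * b j * l1 (P i) (P j)
        ≤ 2 * dobrushin P * c * c := by
      calc ∑ i, ∑ j, a i * b j * l1 (P i) (P j)
          ≤ ∑ i, ∑ j, a i * b j * (2 * dobrushin P) := by
            apply Finset.sum_le_sum; intro i _
            apply Finset.sum_le_sum; intro j _
            exact mul_le_mul_of_nonneg_left (l1_row_le_dob P i j)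
              (mul_nonneg (ha0 i) (hb0 j))
        _ = 2 * dobrushin P * c * c := by
            simp only [← Finset.sum_mul, ← Finset.mul_sum, hsum, ← hc]
            ring
    have : c * l1 (vecMul u P) (vecMul v P) ≤ c * (dobrushin P * l1 u v) := by
      rw [hl1]
      calc c * l1 (vecMul u P) (vecMul v P) ≤ 2 * dobrushin P * c * c :=
            le_trans hbound hbound2
        _ = c * (dobrushin P * (2 * c)) := by ring
    exact le_of_mul_le_mul_left this hcpos

section Stoch
variable [DecidableEq S]

lemma isStochastic_one : IsStochastic (1 : Matrix S S ℝ) := by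
  constructor
  · intro i k
    by_cases h : i = k <;> simp [Matrix.one_apply, h]
  · intro i
    simp [Matrix.one_apply]

lemma isStochastic_mul {A B : Matrix S S ℝ} (hA : IsStochastic A) (hB : IsStochastic B) :
    IsStochastic (A * B) := by
  constructor
  · intro i k
    rw [Matrix.mul_apply]
    exact Finset.sum_nonneg fun m _ => mul_nonneg (hA.1 i m) (hB.1 m k)
  · intro i
    simp only [Matrix.mul_apply]
    rw [Finset.sum_comm]
    calc ∑ m, ∑ k, A i m * B m k = ∑ m, A i m * ∑ k, B m k := by
          simp [Finset.mul_sum]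
      _ = 1 := by simp only [hB.2, mul_one, hA.2]

lemma isStochastic_listProd : ∀ L : List (Matrix S S ℝ),
    (∀ A ∈ L, IsStochastic A) → IsStochastic L.prod
  | [], _ => by simpa using isStochastic_one
  | A :: L, h => by
      rw [List.prod_cons]
      exact isStochastic_mul (h A (by simp)) (isStochastic_listProd L fun B hB => h B (by simp [hB]))

lemma isStochastic_Pprod {P : ℕ → Matrix S S ℝ} (hP : ∀ t, IsStochastic (P t)) (n1 n2 : ℕ) :
    IsStochastic (Pprod P n1 n2) := by
  apply isStochastic_listProd
  intro A hA
  simp only [List.mem_map, List.mem_range] at hA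
  obtain ⟨t, _, rfl⟩ := hA
  exact hP _

lemma Pprod_succ {P : ℕ → Matrix S S ℝ} {a c : ℕ} (h : a ≤ c) :
    Pprod P a (c + 1) = Pprod P a c * P c := by
  unfold Pprod
  rw [show c + 1 - a = (c - a) + 1 by omega, List.range_succ, List.map_append,
    List.prod_append]
  simp [show a + (c - a) = c by omega]

lemma Pprod_mul {P : ℕ → Matrix S S ℝ} {a b c : ℕ} (hab : a ≤ b) (hbc : b ≤ c) :
    Pprod P a b * Pprod P b c = Pprod P a c := by
  induction c, hbc using Nat.le_induction with
  | base => simp [Pprod]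
  | succ c hbc ih =>
      rw [Pprod_succ (le_trans hab hbc), Pprod_succ hbc, ← mul_assoc, ih]

lemma dobrushin_mul_le [Nonempty S] {A B : Matrix S S ℝ}
    (hA : IsStochastic A) (hB : IsStochastic B) :
    dobrushin (A * B) ≤ dobrushin A * dobrushin B := by
  apply ciSup_le
  rintro ⟨i, j⟩
  have hrow : ∀ i : S, (A * B) i = vecMul (A i) B := by
    intro i; funext k; rw [Matrix.mul_apply, Matrix.vecMul, dotProduct]
  have h1 : l1 ((A * B) i) ((A * B) j) ≤ dobrushin B * l1 (A i) (A j) := by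
    rw [hrow i, hrow j]
    exact contraction hB (A i) (A j) (by rw [hA.2 i, hA.2 j])
  have h2 : l1 (A i) (A j) ≤ 2 * dobrushin A := l1_row_le_dob A i j
  have hB0 : 0 ≤ dobrushin B := dobrushin_nonneg B
  nlinarith
end Stoch

end Aux
set_option maxHeartbeats 1000000 in
open Matrix in
/-- Block criterion for weak ergodicity: a nonhomogeneous Markov chain is weakly
ergodic iff there is a strictly increasing sequence of block endpoints `n_i` with
`Σ_i (1 − δ(P^{(n_i, n_{i+1})})) = ∞`. -/
theorem weaklyErgodic_iff_block_criterion {S : Type*} [Fintype S] [Nonempty S]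
    [DecidableEq S] (P : ℕ → Matrix S S ℝ) (hP : ∀ t, IsStochastic (P t)) :
    WeaklyErgodic P ↔
      ∃ n : ℕ → ℕ, StrictMono n ∧
        Tendsto (fun N => ∑ i ∈ Finset.range N, (1 - dobrushin (Pprod P (n i) (n (i + 1)))))
          atTop atTop := by
  constructor
  · intro hWE
    -- from weak ergodicity, every block can be made to have small coefficient
    have key : ∀ m : ℕ, ∃ m', m < m' ∧ dobrushin (Pprod P m m') ≤ 1 / 2 := by
      intro m
      have hdist : ∀ i : S, IsDist (Pi.single i 1 : S → ℝ) := by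
        intro i
        constructor
        · intro k
          by_cases h : k = i <;> simp [Pi.single_apply, h]
        · simp
      have hvec : ∀ (i : S) (M : Matrix S S ℝ), vecMul (Pi.single i 1) M = M i := by
        intro i M
        funext j
        simp [Matrix.vecMul, dotProduct, Pi.single_apply]
      have hpair : ∀ p : S × S,
          Tendsto (fun n2 => l1 ((Pprod P m n2) p.1) ((Pprod P m n2) p.2)) atTop (nhds 0) := by
        rintro ⟨i, j⟩
        have := hWE (Pi.single i 1) (Pi.single j 1) (hdist i) (hdist j) m
        simpa [hvec] using this
      have hev : ∀ᶠ n2 in atTop, ∀ p : S × S,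
          l1 ((Pprod P m n2) p.1) ((Pprod P m n2) p.2) < 1 := by
        rw [eventually_all]
        intro p
        exact (hpair p).eventually (gt_mem_nhds (by norm_num : (0:ℝ) < 1))
      obtain ⟨n2, hn2a, hn2b⟩ := (hev.and (eventually_gt_atTop m)).exists
      refine ⟨n2, hn2b, ?_⟩
      apply ciSup_le
      intro p
      have := hn2a p
      linarith
    choose F hFlt hFd using key
    refine ⟨fun i => F^[i] 0, ?_, ?_⟩
    · apply strictMono_nat_of_lt_succ
      intro i
      rw [Function.iterate_succ_apply']
      exact hFlt _
    · have hterm : ∀ i : ℕ,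
          (1:ℝ)/2 ≤ 1 - dobrushin (Pprod P (F^[i] 0) (F^[i+1] 0)) := by
        intro i
        rw [Function.iterate_succ_apply']
        have := hFd (F^[i] 0)
        linarith
      apply tendsto_atTop_mono (fun N => ?_)
        (Tendsto.atTop_div_const (by norm_num : (0:ℝ) < 2)
          (tendsto_natCast_atTop_atTop (R := ℝ)))
      calc (N:ℝ)/2 = ∑ _i ∈ Finset.range N, (1:ℝ)/2 := by
            simp [Finset.sum_const, Finset.card_range]
            ring
        _ ≤ ∑ i ∈ Finset.range N, (1 - dobrushin (Pprod P (F^[i] 0) (F^[i+1] 0))) :=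
            Finset.sum_le_sum fun i _ => hterm i
  · rintro ⟨n, hmono, hsum⟩
    intro μ ν hμ hν n1
    set D : ℕ → ℝ := fun i => dobrushin (Pprod P (n i) (n (i+1))) with hD
    set Ssum : ℕ → ℝ := fun N => ∑ i ∈ Finset.range N, (1 - D i) with hS
    -- dobrushin of the big product tends to 0
    have hdob0 : Tendsto (fun n2 => dobrushin (Pprod P n1 n2)) atTop (nhds 0) := by
      obtain ⟨i0, hi0⟩ : ∃ i0, n1 ≤ n i0 := ⟨n1, hmono.le_apply⟩
      have claim1 : ∀ m, i0 ≤ m →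
          dobrushin (Pprod P n1 (n m)) ≤ ∏ i ∈ Finset.Ico i0 m, D i := by
        intro m hm
        induction m, hm using Nat.le_induction with
        | base =>
            simp only [Finset.Ico_self, Finset.prod_empty]
            exact dobrushin_le_one (isStochastic_Pprod hP _ _)
        | succ m hm ih =>
            have h1 : n1 ≤ n m := le_trans hi0 (hmono.monotone hm)
            have h2 : n m ≤ n (m+1) := (hmono (Nat.lt_succ_self m)).le
            calc dobrushin (Pprod P n1 (n (m+1)))
                ≤ dobrushin (Pprod P n1 (n m)) * D m := by
                  rw [← Pprod_mul h1 h2]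
                  exact dobrushin_mul_le (isStochastic_Pprod hP _ _)
                    (isStochastic_Pprod hP _ _)
              _ ≤ (∏ i ∈ Finset.Ico i0 m, D i) * D m :=
                  mul_le_mul_of_nonneg_right ih (dobrushin_nonneg _)
              _ = ∏ i ∈ Finset.Ico i0 (m+1), D i := by
                  rw [Finset.prod_Ico_succ_top hm]
      have claim2 : ∀ m, i0 ≤ m → ∀ n2, n m ≤ n2 →
          dobrushin (Pprod P n1 n2) ≤ Real.exp (Ssum i0 - Ssum m) := by
        intro m hm n2 hn2
        have h1 : n1 ≤ n m := le_trans hi0 (hmono.monotone hm)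
        have hstep : dobrushin (Pprod P n1 n2)
            ≤ dobrushin (Pprod P n1 (n m)) * dobrushin (Pprod P (n m) n2) := by
          rw [← Pprod_mul h1 hn2]
          exact dobrushin_mul_le (isStochastic_Pprod hP _ _) (isStochastic_Pprod hP _ _)
        have hle1 : dobrushin (Pprod P (n m) n2) ≤ 1 :=
          dobrushin_le_one (isStochastic_Pprod hP _ _)
        have hprodexp : (∏ i ∈ Finset.Ico i0 m, D i)
            ≤ Real.exp (-(∑ i ∈ Finset.Ico i0 m, (1 - D i))) := by
          rw [← Finset.sum_neg_distrib, Real.exp_sum]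
          apply Finset.prod_le_prod (fun i _ => dobrushin_nonneg _)
          intro i _
          have := Real.add_one_le_exp (D i - 1)
          calc D i = (D i - 1) + 1 := by ring
            _ ≤ Real.exp (D i - 1) := this
            _ = Real.exp (-(1 - D i)) := by ring_nf
        have hIco : ∑ i ∈ Finset.Ico i0 m, (1 - D i) = Ssum m - Ssum i0 := by
          rw [hS]
          rw [Finset.sum_Ico_eq_sub _ hm]
        calc dobrushin (Pprod P n1 n2)
            ≤ dobrushin (Pprod P n1 (n m)) * dobrushin (Pprod P (n m) n2) := hstep
          _ ≤ (∏ i ∈ Finset.Ico i0 m, D i) * 1 := by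
              apply mul_le_mul (claim1 m hm) hle1 (dobrushin_nonneg _)
              exact le_trans (dobrushin_nonneg _) (claim1 m hm)
          _ = ∏ i ∈ Finset.Ico i0 m, D i := mul_one _
          _ ≤ Real.exp (-(∑ i ∈ Finset.Ico i0 m, (1 - D i))) := hprodexp
          _ = Real.exp (Ssum i0 - Ssum m) := by rw [hIco]; ring_nf
      rw [Metric.tendsto_atTop]
      intro ε hε
      have hexp0 : Tendsto (fun m => Real.exp (Ssum i0 - Ssum m)) atTop (nhds 0) := by
        apply Real.tendsto_exp_atBot.comp
        apply tendsto_atBot_add_const_left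
        exact (tendsto_neg_atBot_iff.mpr hsum)
      have hev : ∀ᶠ m in atTop, Real.exp (Ssum i0 - Ssum m) < ε :=
        hexp0.eventually (gt_mem_nhds hε)
      obtain ⟨m, hm1, hm2⟩ := ((eventually_ge_atTop i0).and hev).exists
      refine ⟨n m, fun n2 hn2 => ?_⟩
      rw [Real.dist_eq, sub_zero, abs_of_nonneg (dobrushin_nonneg _)]
      exact lt_of_le_of_lt (claim2 m hm1 n2 hn2) hm2
    -- squeeze
    apply squeeze_zero (fun n2 => l1_nonneg _ _) (g := fun n2 => 2 * dobrushin (Pprod P n1 n2))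
    · intro n2
      calc l1 (vecMul μ (Pprod P n1 n2)) (vecMul ν (Pprod P n1 n2))
          ≤ dobrushin (Pprod P n1 n2) * l1 μ ν :=
            contraction (isStochastic_Pprod hP _ _) μ ν (by rw [hμ.2, hν.2])
        _ ≤ 2 * dobrushin (Pprod P n1 n2) := by
            have h2 := l1_le_two hμ hν
            have h0 := dobrushin_nonneg (Pprod P n1 n2)
            nlinarith
    · simpa using hdob0.const_mul 2
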